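/- Let F be a field and α₁,…,αₙ the n distinct roots of x^n - λ (λ ≠ 0). Fix 2 ≤ k, 1 ≤ h ≤ k-1, l ≤ n-k-1, and η₀,…,η_l ∈ F. Let g(x) = ∏_{i=1}^{k-1}(x - αᵢ), f(x) = ∏_{i=k}^{n}(x - αᵢ) (so g·f = x^n - λ), q(x) = x^{h-1} + ∑_{t=0}^{l} η_t x^{k+t-1}, and write x^{n-h} = t(x)f(x) + ρ(x) with deg ρ ≤ n-k, ρ(x) = ∑_{j=0}^{n-k} ρ_j x^j. Let r_{h-1} be the coefficient of x^{h-1} in q(x) mod g(x). Then r_{h-1} = 1 - ∑_{t=0}^{l} η_t ρ_{n-k-t}. -/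

import Mathlib

open Polynomial in
theorem aux13 {F : Type*} [Field F] (n k h t : ℕ) (hk : 2 ≤ k) (hh1 : 1 ≤ h) (hh2 : h ≤ k - 1)
    (ht : t + k + 1 ≤ n) (lam : F) (g f : Polynomial F) (hgm : g.Monic) (hfm : f.Monic)
    (hgd : g.natDegree = k - 1) (hfd : f.natDegree = n - (k - 1))
    (hgf : g * f = X ^ n - C lam) :
    (X ^ (k + t - 1) %ₘ g).coeff (h - 1) = -((X ^ (n - h) %ₘ f).coeff (n - k - t)) := by
  have e1 := (modByMonic_add_div ((X : F[X]) ^ (k + t - 1)) g).symm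
  have e2 := (modByMonic_add_div ((X : F[X]) ^ (n - h)) f).symm
  set A := X ^ (k + t - 1) %ₘ g with hA
  set B := (X : F[X]) ^ (k + t - 1) /ₘ g with hB
  set P := X ^ (n - h) %ₘ f with hP
  set T := (X : F[X]) ^ (n - h) /ₘ f with hT
  have g1 : g ≠ 1 := by
    intro hc; rw [hc, natDegree_one] at hgd; omega
  have f1 : f ≠ 1 := by
    intro hc; rw [hc, natDegree_one] at hfd; omega
  have hAd : A.natDegree < k - 1 := hgd ▸ natDegree_modByMonic_lt _ hgm g1
  have hPd : P.natDegree < n - (k - 1) := hfd ▸ natDegree_modByMonic_lt _ hfm f1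
  have hBd : B.natDegree ≤ t := by
    rw [hB, natDegree_divByMonic _ hgm, natDegree_X_pow, hgd]; omega
  have hTd : T.natDegree ≤ k - 1 - h := by
    rw [hT, natDegree_divByMonic _ hfm, natDegree_X_pow, hfd]; omega
  have key : (X : F[X]) ^ (k + t - 1) * X ^ (n - h)
      = B * T * (X ^ n - C lam) + B * g * P + A * X ^ (n - h) := by
    calc (X : F[X]) ^ (k + t - 1) * X ^ (n - h)
        = (A + g * B) * (P + f * T) := by rw [← e1, ← e2]
      _ = B * T * (g * f) + B * g * P + A * (P + f * T) := by ring
      _ = B * T * (X ^ n - C lam) + B * g * P + A * X ^ (n - h) := by rw [hgf, ← e2]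
  have hc := congrArg (fun p : F[X] => p.coeff (n - 1)) key
  simp only [coeff_add] at hc
  -- LHS coefficient
  have c0 : ((X : F[X]) ^ (k + t - 1) * X ^ (n - h)).coeff (n - 1) = 0 := by
    rw [← pow_add, coeff_X_pow, if_neg (by omega)]
  -- first RHS term
  have c1 : (B * T * (X ^ n - C lam)).coeff (n - 1) = 0 := by
    rw [mul_sub, coeff_sub, coeff_mul_X_pow', if_neg (by omega)]
    have : (B * T).natDegree < n - 1 := by
      have := natDegree_mul_le (p := B) (q := T)
      omega
    rw [mul_comm (B * T) (C lam), coeff_C_mul, coeff_eq_zero_of_natDegree_lt this]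
    ring
  -- second RHS term
  have hBg : B * g = (X : F[X]) ^ (k + t - 1) - A := by rw [e1]; ring
  have c2 : (B * g * P).coeff (n - 1) = P.coeff (n - k - t) := by
    rw [hBg, sub_mul, coeff_sub]
    rw [mul_comm ((X : F[X]) ^ (k + t - 1)) P, coeff_mul_X_pow', if_pos (by omega)]
    have : (A * P).natDegree < n - 1 := by
      have := natDegree_mul_le (p := A) (q := P)
      omega
    rw [coeff_eq_zero_of_natDegree_lt this]
    have : n - 1 - (k + t - 1) = n - k - t := by omega
    rw [this]; ring
  -- third RHS term
  have c3 : (A * X ^ (n - h)).coeff (n - 1) = A.coeff (h - 1) := by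
    rw [coeff_mul_X_pow', if_pos (by omega)]
    congr 1; omega
  rw [c0, c1, c2, c3] at hc
  linear_combination -hc

open Polynomial in
theorem stmt_13 {F : Type*} [Field F] (n k l h : ℕ) (hk : 2 ≤ k)
    (hh1 : 1 ≤ h) (hh2 : h ≤ k - 1) (hl : l + k + 1 ≤ n)
    (lam : F) (hlam : lam ≠ 0) (α : Fin n → F) (hα : Function.Injective α)
    (hsplit : ∏ i, (X - C (α i)) = X ^ n - C lam) (η : ℕ → F)
    (g f q ρ : Polynomial F)
    (hg : g = ∏ i ∈ Finset.univ.filter (fun i : Fin n => (i : ℕ) < k - 1), (X - C (α i)))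
    (hf : f = ∏ i ∈ Finset.univ.filter (fun i : Fin n => k - 1 ≤ (i : ℕ)), (X - C (α i)))
    (hq : q = X ^ (h - 1) + ∑ t ∈ Finset.range (l + 1), C (η t) * X ^ (k + t - 1))
    (hρ : ρ = X ^ (n - h) %ₘ f) :
    (q %ₘ g).coeff (h - 1)
      = 1 - ∑ t ∈ Finset.range (l + 1), η t * ρ.coeff (n - k - t) := by
  have hkn : k - 1 < n := by omega
  -- cardinalities of the filters
  have hcard1 : (Finset.univ.filter (fun i : Fin n => (i : ℕ) < k - 1)).card = k - 1 := by
    have : (Finset.univ.filter (fun i : Fin n => (i : ℕ) < k - 1))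
        = Finset.Iio (⟨k - 1, hkn⟩ : Fin n) := by
      ext i; simp [Fin.lt_def]
    rw [this, Fin.card_Iio]
  have hfilter : (Finset.univ.filter (fun i : Fin n => ¬ ((i : ℕ) < k - 1)))
      = Finset.univ.filter (fun i : Fin n => k - 1 ≤ (i : ℕ)) := by
    ext i; simp [not_lt]
  have hcard2 : (Finset.univ.filter (fun i : Fin n => k - 1 ≤ (i : ℕ))).card = n - (k - 1) := by
    have : (Finset.univ.filter (fun i : Fin n => k - 1 ≤ (i : ℕ)))
        = Finset.Ici (⟨k - 1, hkn⟩ : Fin n) := by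
      ext i; simp [Fin.le_def]
    rw [this, Fin.card_Ici]
  -- monicity and degrees
  have hgm : g.Monic := by
    rw [hg]; exact monic_prod_of_monic _ _ fun i _ => monic_X_sub_C _
  have hfm : f.Monic := by
    rw [hf]; exact monic_prod_of_monic _ _ fun i _ => monic_X_sub_C _
  have hgd : g.natDegree = k - 1 := by
    rw [hg, natDegree_prod_of_monic _ _ fun i _ => monic_X_sub_C _]
    simp only [natDegree_X_sub_C]
    rw [Finset.sum_const, smul_eq_mul, mul_one, hcard1]
  have hfd : f.natDegree = n - (k - 1) := by
    rw [hf, natDegree_prod_of_monic _ _ fun i _ => monic_X_sub_C _]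
    simp only [natDegree_X_sub_C]
    rw [Finset.sum_const, smul_eq_mul, mul_one, hcard2]
  have hgf : g * f = X ^ n - C lam := by
    rw [hg, hf, ← hsplit,
      ← Finset.prod_filter_mul_prod_filter_not Finset.univ (fun i : Fin n => (i : ℕ) < k - 1)
        (fun i => X - C (α i)), hfilter]
  -- reduce q mod g
  have hqmod : q %ₘ g = X ^ (h - 1)
      + ∑ t ∈ Finset.range (l + 1), C (η t) * (X ^ (k + t - 1) %ₘ g) := by
    rw [hq, add_modByMonic]
    congr 1
    · exact (modByMonic_eq_self_iff hgm).2 (by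
        rw [degree_X_pow, degree_eq_natDegree hgm.ne_zero, hgd]
        exact_mod_cast (by omega : h - 1 < k - 1))
    · have : ((∑ t ∈ Finset.range (l + 1), C (η t) * X ^ (k + t - 1)) %ₘ g)
          = (modByMonicHom g) (∑ t ∈ Finset.range (l + 1), C (η t) * X ^ (k + t - 1)) := rfl
      rw [this, map_sum]
      refine Finset.sum_congr rfl fun t _ => ?_
      rw [modByMonicHom_apply, ← smul_eq_C_mul, smul_modByMonic, smul_eq_C_mul]
  rw [hqmod, coeff_add, coeff_X_pow, if_pos rfl, finset_sum_coeff]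
  rw [sub_eq_add_neg, ← Finset.sum_neg_distrib]
  congr 1
  refine Finset.sum_congr rfl fun t htmem => ?_
  rw [Finset.mem_range] at htmem
  rw [coeff_C_mul, aux13 n k h t hk hh1 hh2 (by omega) lam g f hgm hfm hgd hfd hgf, hρ]
  ring
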